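/- arXiv:1703.03052 — 2 statements merged into one kernel-verified Lean document; each statement's English description precedes it below -/
import Mathlib

section
/- Let M be a compact connected Riemannian manifold without boundary with Laplace–Beltrami operator Δ, and let E_ω(Δ) denote the span of eigenfunctions of Δ with eigenvalue ≤ ω. Then a function f ∈ L²(M) belongs to E_ω(Δ) if and only if f is in the domain of all powers of Δ and satisfies the Bernstein inequality ‖Δᵏ f‖_{L²(M)} ≤ ωᵏ ‖f‖_{L²(M)} for all natural numbers k. -/
/- STATEMENT 0: On a compact connected Riemannian manifold, `f ∈ L²(M)` belongs to the
span `E_ω(Δ)` of eigenfunctions of the Laplace–Beltrami operator Δ with eigenvalue ≤ ω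
iff `f` is in the domain of all powers of Δ and satisfies the Bernstein inequality
‖Δᵏ f‖ ≤ ωᵏ ‖f‖ for all k.  We model L²(M) as an abstract Hilbert space `H` with a
Hilbert (orthonormal) basis `u` of eigenfunctions of Δ with nonnegative eigenvalues
`Λ l` tending to infinity (the spectral picture of Δ on a compact manifold); then
`‖Δᵏ f‖² = Σ_l (Λ l)^{2k} |⟨u_l, f⟩|²` and membership in the domain of Δᵏ means this
series is summable. -/
theorem bandlimited_iff_bernstein
    {H : Type*} [NormedAddCommGroup H] [InnerProductSpace ℂ H] [CompleteSpace H]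
    (u : HilbertBasis ℕ ℂ H) (Λ : ℕ → ℝ)
    (hΛ0 : ∀ l, 0 ≤ Λ l)
    (hΛtop : Filter.Tendsto Λ Filter.atTop Filter.atTop)
    (ω : ℝ) (hω : 0 ≤ ω) (f : H) :
    f ∈ Submodule.span ℂ (u '' {l : ℕ | Λ l ≤ ω}) ↔
      ((∀ k : ℕ, Summable fun l : ℕ => (Λ l) ^ (2 * k) * ‖u.repr f l‖ ^ 2) ∧
        ∀ k : ℕ,
          Real.sqrt (∑' l : ℕ, (Λ l) ^ (2 * k) * ‖u.repr f l‖ ^ 2) ≤ ω ^ k * ‖f‖) := by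
  -- the set of indices with small eigenvalue is finite
  obtain ⟨N, hN⟩ : ∃ N : ℕ, ∀ l ≥ N, ω < Λ l :=
    (hΛtop.eventually_gt_atTop ω).exists_forall_of_atTop
  have hSfin : {l : ℕ | Λ l ≤ ω} ⊆ ↑(Finset.range N) := by
    intro l hl
    simp only [Finset.coe_range, Set.mem_Iio]
    by_contra h
    exact absurd hl (not_le.2 (hN l (le_of_not_gt h)))
  -- summability of norms squared
  have hsq : Summable fun l : ℕ => ‖u.repr f l‖ ^ 2 := by
    have := lp.memℓp (u.repr f)
    have h2 : (0:ℝ) < (2 : ENNReal).toReal := by norm_num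
    have := (memℓp_gen_iff h2).1 this
    simpa using this
  have hnormsq : ‖f‖ ^ 2 = ∑' l : ℕ, ‖u.repr f l‖ ^ 2 := by
    have h2 : (0:ℝ) < (2 : ENNReal).toReal := by norm_num
    have := lp.norm_rpow_eq_tsum h2 (u.repr f)
    rw [u.repr.norm_map] at this
    simpa [Real.rpow_natCast] using this
  constructor
  · intro hf
    -- repr vanishes outside S
    have hvan : ∀ l : ℕ, ω < Λ l → u.repr f l = 0 := by
      intro l hl
      rw [u.repr_apply_apply]
      refine Submodule.span_induction (p := fun x _ => (inner ℂ (u l) x : ℂ) = 0)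
        ?_ (by simp) (fun x y _ _ hx hy => by simp [inner_add_right, hx, hy])
        (fun c x _ hx => by simp [inner_smul_right, hx]) hf
      rintro x ⟨j, hj, rfl⟩
      refine u.orthonormal.2 fun h => ?_
      subst h
      exact absurd hj (not_le.2 hl)
    have hbd : ∀ k : ℕ, ∀ l : ℕ, (Λ l) ^ (2 * k) * ‖u.repr f l‖ ^ 2
        ≤ ω ^ (2 * k) * ‖u.repr f l‖ ^ 2 := by
      intro k l
      rcases le_or_gt (Λ l) ω with h | h
      · exact mul_le_mul_of_nonneg_right (pow_le_pow_left₀ (hΛ0 l) h _) (by positivity)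
      · simp [hvan l h]
    have hsum : ∀ k : ℕ, Summable fun l : ℕ => (Λ l) ^ (2 * k) * ‖u.repr f l‖ ^ 2 := by
      intro k
      refine Summable.of_nonneg_of_le (fun l => mul_nonneg (pow_nonneg (hΛ0 l) _) (sq_nonneg _)) (hbd k) ?_
      exact (hsq.mul_left _)
    refine ⟨hsum, fun k => ?_⟩
    have h1 : (∑' l : ℕ, (Λ l) ^ (2 * k) * ‖u.repr f l‖ ^ 2)
        ≤ ω ^ (2 * k) * ‖f‖ ^ 2 := by
      rw [hnormsq, ← tsum_mul_left]
      exact Summable.tsum_le_tsum (hbd k) (hsum k) (hsq.mul_left _)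
    have h2 : ω ^ (2 * k) * ‖f‖ ^ 2 = (ω ^ k * ‖f‖) ^ 2 := by ring
    calc Real.sqrt (∑' l : ℕ, (Λ l) ^ (2 * k) * ‖u.repr f l‖ ^ 2)
        ≤ Real.sqrt ((ω ^ k * ‖f‖) ^ 2) := Real.sqrt_le_sqrt (h2 ▸ h1)
      _ = ω ^ k * ‖f‖ := Real.sqrt_sq (mul_nonneg (pow_nonneg hω _) (norm_nonneg _))
  · rintro ⟨hsum, hbern⟩
    -- repr f l = 0 for ω < Λ l
    have hvan : ∀ l : ℕ, ω < Λ l → u.repr f l = 0 := by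
      intro l hl
      have key : ∀ k : ℕ, (Λ l) ^ (2 * k) * ‖u.repr f l‖ ^ 2 ≤ ω ^ (2 * k) * ‖f‖ ^ 2 := by
        intro k
        have hle : (Λ l) ^ (2 * k) * ‖u.repr f l‖ ^ 2
            ≤ ∑' m : ℕ, (Λ m) ^ (2 * k) * ‖u.repr f m‖ ^ 2 :=
          Summable.le_tsum (hsum k) l (fun m _ => mul_nonneg (pow_nonneg (hΛ0 m) _) (sq_nonneg _))
        have := hbern k
        have h2 : (∑' m : ℕ, (Λ m) ^ (2 * k) * ‖u.repr f m‖ ^ 2) ≤ (ω ^ k * ‖f‖) ^ 2 := by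
          have hnn : 0 ≤ ∑' m : ℕ, (Λ m) ^ (2 * k) * ‖u.repr f m‖ ^ 2 :=
            tsum_nonneg (fun m => mul_nonneg (pow_nonneg (hΛ0 m) _) (sq_nonneg _))
          nlinarith [Real.sq_sqrt hnn, Real.sqrt_nonneg (∑' m : ℕ, (Λ m) ^ (2 * k) * ‖u.repr f m‖ ^ 2)]
        calc (Λ l) ^ (2 * k) * ‖u.repr f l‖ ^ 2 ≤ (ω ^ k * ‖f‖) ^ 2 := hle.trans h2
          _ = ω ^ (2 * k) * ‖f‖ ^ 2 := by ring
      have hΛl : 0 < Λ l := lt_of_le_of_lt hω hl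
      -- so ‖repr f l‖² ≤ (ω/Λ l)^{2k} ‖f‖² → 0
      have hlim : Filter.Tendsto (fun k : ℕ => (ω / Λ l) ^ (2 * k) * ‖f‖ ^ 2)
          Filter.atTop (nhds 0) := by
        have hr : |ω / Λ l| < 1 := by
          rw [abs_of_nonneg (by positivity)]
          exact (div_lt_one hΛl).2 hl
        have := (tendsto_pow_atTop_nhds_zero_of_abs_lt_one hr).comp
          (Filter.tendsto_atTop_atTop_of_monotone (fun a b hab => by omega)
            (fun b => ⟨b, by omega⟩) : Filter.Tendsto (fun k : ℕ => 2 * k) Filter.atTop Filter.atTop)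
        simpa using this.mul_const (‖f‖ ^ 2)
      have hbound : ∀ k : ℕ, ‖u.repr f l‖ ^ 2 ≤ (ω / Λ l) ^ (2 * k) * ‖f‖ ^ 2 := by
        intro k
        rw [div_pow, div_mul_eq_mul_div, le_div_iff₀ (pow_pos hΛl _)]
        calc ‖u.repr f l‖ ^ 2 * Λ l ^ (2 * k) = Λ l ^ (2 * k) * ‖u.repr f l‖ ^ 2 := mul_comm _ _
          _ ≤ ω ^ (2 * k) * ‖f‖ ^ 2 := key k
      have : ‖u.repr f l‖ ^ 2 ≤ 0 :=
        le_of_tendsto_of_tendsto' tendsto_const_nhds hlim hbound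
      have : ‖u.repr f l‖ = 0 := by nlinarith [norm_nonneg (u.repr f l), sq_nonneg (‖u.repr f l‖)]
      simpa using this
    -- f is a finite sum of basis vectors in S
    have hfin : ∀ l ∉ Finset.range N, u.repr f l • u l = 0 := by
      intro l hl
      rw [hvan l (hN l (by simpa using hl))]
      simp
    have hsum2 : HasSum (fun l => u.repr f l • u l) (∑ l ∈ Finset.range N, u.repr f l • u l) :=
      hasSum_sum_of_ne_finset_zero hfin
    have := (u.hasSum_repr f).unique hsum2
    rw [this]
    apply Submodule.sum_mem
    intro l hl
    rcases le_or_gt (Λ l) ω with h | h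
    · exact Submodule.smul_mem _ _ (Submodule.subset_span ⟨l, h, rfl⟩)
    · rw [hvan l h]; simp
end

section
/- Let M be a compact Riemannian manifold of dimension d with Laplace–Beltrami operator Δ, eigenvalues λ_l, and orthonormal eigenbasis u_l, and assume the heat kernel satisfies two-sided Gaussian bounds for small time. Then there exist constants A₁ = A₁(M) > 0 and A₂ = A₂(M) > 0 such that for all sufficiently large s > 0 and all x ∈ M: A₁ / |B(x, s^{−1})| ≤ Σ_{l : λ_l ≤ s} |u_l(x)|² ≤ A₂ / |B(x, s^{−1})|. -/
open MeasureTheory Metric Set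

/- STATEMENT 13 (Lemma `key`): Let M be a compact Riemannian manifold of dimension d
with Laplace–Beltrami operator Δ whose heat kernel p_t(x,y) = Σ_l e^{-tΛ_l²} u_l(x)
conj(u_l(y)) (so √Δ has eigenvalues Λ_l) satisfies two-sided Gaussian bounds for
0 < t < 1, and whose small balls satisfy a₁ρ^d ≤ |B(x,ρ)| ≤ a₂ρ^d.  Then there exist
A₁ = A₁(M) > 0 and A₂ = A₂(M) > 0 such that for all sufficiently large s > 0 and all
x ∈ M: A₁ / |B(x, s⁻¹)| ≤ Σ_{l : Λ_l ≤ s} |u_l(x)|² ≤ A₂ / |B(x, s⁻¹)|. -/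
theorem spectral_function_ball_bounds
    {M : Type*} [MetricSpace M] [CompactSpace M] [MeasurableSpace M]
    (μ : Measure M) (d : ℕ)
    (Λ : ℕ → ℝ) (u : ℕ → M → ℂ) (hΛ0 : ∀ l, 0 ≤ Λ l)
    (hΛtop : Filter.Tendsto Λ Filter.atTop Filter.atTop)
    (p : ℝ → M → M → ℝ) (C₁ C₂ c₁ c₂ a₁ a₂ : ℝ)
    (hC₁ : 0 < C₁) (hC₂ : 0 < C₂) (hc₁ : 0 < c₁) (hc₂ : 0 < c₂)
    (ha₁ : 0 < a₁) (ha₂ : 0 < a₂)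
    (hdiag : ∀ t : ℝ, 0 < t → ∀ x : M,
      HasSum (fun l => Real.exp (-t * (Λ l) ^ 2) * ‖u l x‖ ^ 2) (p t x x))
    (hgauss : ∀ t : ℝ, 0 < t → t < 1 → ∀ x y : M,
      C₁ * t ^ (-(d : ℝ) / 2) * Real.exp (-c₁ * dist x y ^ 2 / t) ≤ p t x y ∧
      p t x y ≤ C₂ * t ^ (-(d : ℝ) / 2) * Real.exp (-c₂ * dist x y ^ 2 / t))
    (hvol : ∀ (x : M) (ρ : ℝ), 0 < ρ → ρ < 1 →
      a₁ * ρ ^ d ≤ (μ (ball x ρ)).toReal ∧ (μ (ball x ρ)).toReal ≤ a₂ * ρ ^ d) :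
    ∃ A₁ A₂ : ℝ, 0 < A₁ ∧ 0 < A₂ ∧ ∃ s₀ : ℝ, 0 < s₀ ∧
      ∀ s : ℝ, s₀ ≤ s → ∀ x : M,
        A₁ / (μ (ball x s⁻¹)).toReal ≤ (∑' l : {l : ℕ // Λ l ≤ s}, ‖u l.1 x‖ ^ 2) ∧
        (∑' l : {l : ℕ // Λ l ≤ s}, ‖u l.1 x‖ ^ 2) ≤ A₂ / (μ (ball x s⁻¹)).toReal := by
  classical
  set P : ℝ := (2:ℝ) ^ ((d:ℝ)/2) with hPdef
  have hPpos : 0 < P := Real.rpow_pos_of_pos (by norm_num) _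
  set K : ℝ := 2 * C₂ * P / C₁ with hKdef
  have hKpos : 0 < K := by positivity
  set T : ℝ := 2 * Real.log (max 1 K) + 2 with hTdef
  have hlognn : 0 ≤ Real.log (max 1 K) := Real.log_nonneg (le_max_left _ _)
  have hTpos : 0 < T := by rw [hTdef]; linarith
  have hTtail : C₂ * P * Real.exp (-(T/2)) ≤ C₁ / 2 := by
    have h0 : (0:ℝ) < max 1 K := lt_of_lt_of_le one_pos (le_max_left _ _)
    have h1 : Real.exp (-(T/2)) = (max 1 K)⁻¹ * Real.exp (-1) := by
      have heq : -(T/2) = -Real.log (max 1 K) + -1 := by rw [hTdef]; ring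
      rw [heq, Real.exp_add, Real.exp_neg, Real.exp_log h0]
    have h2 : (max 1 K)⁻¹ ≤ K⁻¹ := by
      apply inv_anti₀ hKpos (le_max_right _ _)
    have h3 : Real.exp (-1:ℝ) ≤ 1 := Real.exp_le_one_iff.mpr (by norm_num)
    have h4 : C₂ * P * K⁻¹ = C₁ / 2 := by
      rw [hKdef]; field_simp
    have h5 : Real.exp (-(T/2)) ≤ K⁻¹ := by
      calc Real.exp (-(T/2)) = (max 1 K)⁻¹ * Real.exp (-1) := h1
        _ ≤ K⁻¹ * 1 := by
            apply mul_le_mul h2 h3 (Real.exp_nonneg _) (by positivity)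
        _ = K⁻¹ := mul_one _
    calc C₂ * P * Real.exp (-(T/2)) ≤ C₂ * P * K⁻¹ := by
          apply mul_le_mul_of_nonneg_left h5 (by positivity)
      _ = C₁ / 2 := h4
  refine ⟨C₁/2 * T ^ (-(d:ℝ)/2) * a₁, Real.exp 1 * C₂ * a₂, ?_, ?_,
    max 2 (Real.sqrt T + 1), lt_of_lt_of_le two_pos (le_max_left _ _), ?_⟩
  · exact mul_pos (mul_pos (by linarith) (Real.rpow_pos_of_pos hTpos _)) ha₁
  · positivity
  intro s hs x
  have hs2 : 2 ≤ s := le_trans (le_max_left _ _) hs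
  have hsp : 0 < s := by linarith
  have hs1 : 1 < s := by linarith
  have hsqle : Real.sqrt T + 1 ≤ s := le_trans (le_max_right _ _) hs
  have hsT : T < s ^ 2 := by
    have h := Real.sq_sqrt hTpos.le
    nlinarith [Real.sqrt_nonneg T]
  -- ball volume facts
  have hρ1 : 0 < s⁻¹ := inv_pos.mpr hsp
  have hρ2 : s⁻¹ < 1 := inv_lt_one_of_one_lt₀ hs1
  obtain ⟨hB1, hB2⟩ := hvol x s⁻¹ hρ1 hρ2
  set V := (μ (ball x s⁻¹)).toReal with hVdef
  have hVpos : 0 < V := lt_of_lt_of_le (by positivity) hB1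
  have hsdpos : (0:ℝ) < s ^ d := by positivity
  have hmul1 : (s⁻¹:ℝ) ^ d * s ^ d = 1 := by
    rw [inv_pow]; field_simp
  have hVs1 : a₁ / V ≤ s ^ d := by
    rw [div_le_iff₀ hVpos]
    calc a₁ = a₁ * (s⁻¹ ^ d * s ^ d) := by rw [hmul1, mul_one]
      _ = (a₁ * s⁻¹ ^ d) * s ^ d := by ring
      _ ≤ V * s ^ d := mul_le_mul_of_nonneg_right hB1 hsdpos.le
      _ = s ^ d * V := mul_comm _ _
  have hVs2 : s ^ d ≤ a₂ / V := by
    rw [le_div_iff₀ hVpos]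
    calc s ^ d * V ≤ s ^ d * (a₂ * s⁻¹ ^ d) := mul_le_mul_of_nonneg_left hB2 hsdpos.le
      _ = a₂ * (s⁻¹ ^ d * s ^ d) := by ring
      _ = a₂ := by rw [hmul1, mul_one]
  -- rpow computation
  have h2d : ((s:ℝ) ^ 2) ^ ((d:ℝ)/2) = s ^ d := by
    rw [← Real.rpow_natCast s 2, ← Real.rpow_mul hsp.le,
      show ((2:ℕ):ℝ) * ((d:ℝ)/2) = (d:ℝ) by push_cast; ring, Real.rpow_natCast]
  have hsd : ∀ b : ℝ, 0 < b → (b / s ^ 2) ^ (-(d:ℝ)/2) = b ^ (-(d:ℝ)/2) * s ^ d := by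
    intro b hb
    rw [Real.div_rpow hb.le (by positivity), neg_div, Real.rpow_neg (by positivity : (0:ℝ) ≤ s^2),
      h2d, div_eq_mul_inv, inv_inv]
  -- summability
  have hsum : ∀ t : ℝ, 0 < t → Summable (fun l => Real.exp (-t * Λ l ^ 2) * ‖u l x‖ ^ 2) :=
    fun t ht => (hdiag t ht x).summable
  set S : Set ℕ := {l | Λ l ≤ s} with hSdef
  -- upper bound time
  set tu : ℝ := (s ^ 2)⁻¹ with htudef
  have htu : 0 < tu := by positivity
  have htu1 : tu < 1 := by
    rw [htudef]
    rw [inv_lt_one_iff₀]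
    right; nlinarith
  have htus : tu * s ^ 2 = 1 := by rw [htudef]; field_simp
  have hbound : ∀ l : S, ‖u l.1 x‖ ^ 2 ≤ Real.exp 1 * (Real.exp (-tu * Λ l.1 ^ 2) * ‖u l.1 x‖ ^ 2) := by
    intro l
    have hl : Λ l.1 ≤ s := l.2
    have h1 : (1:ℝ) ≤ Real.exp 1 * Real.exp (-tu * Λ l.1 ^ 2) := by
      rw [← Real.exp_add]
      apply Real.one_le_exp
      have hΛs : Λ l.1 ^ 2 ≤ s ^ 2 := pow_le_pow_left₀ (hΛ0 l.1) hl 2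
      have hmm : tu * Λ l.1 ^ 2 ≤ tu * s ^ 2 := mul_le_mul_of_nonneg_left hΛs htu.le
      linarith [htus, hmm]
    calc ‖u l.1 x‖ ^ 2 = 1 * ‖u l.1 x‖ ^ 2 := (one_mul _).symm
      _ ≤ (Real.exp 1 * Real.exp (-tu * Λ l.1 ^ 2)) * ‖u l.1 x‖ ^ 2 :=
          mul_le_mul_of_nonneg_right h1 (sq_nonneg _)
      _ = Real.exp 1 * (Real.exp (-tu * Λ l.1 ^ 2) * ‖u l.1 x‖ ^ 2) := mul_assoc _ _ _
  have hfS : Summable (fun l : S => ‖u l.1 x‖ ^ 2) := by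
    apply Summable.of_nonneg_of_le (fun l => by positivity) hbound
    exact (((hsum tu htu).subtype S).mul_left (Real.exp 1))
  have hupper : (∑' l : S, ‖u l.1 x‖ ^ 2) ≤ Real.exp 1 * C₂ * a₂ / V := by
    have htur : tu ^ (-(d:ℝ)/2) = s ^ d := by
      have h1 : tu = 1 / s ^ 2 := by rw [htudef, one_div]
      rw [h1, hsd 1 one_pos, Real.one_rpow, one_mul]
    have hGu := (hgauss tu htu htu1 x x).2
    rw [dist_self] at hGu
    have hpu : p tu x x ≤ C₂ * s ^ d := by
      calc p tu x x ≤ C₂ * tu ^ (-(d:ℝ)/2) * Real.exp (-c₂ * 0 ^ 2 / tu) := hGu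
        _ = C₂ * s ^ d := by rw [htur]; norm_num
    have step1 : (∑' l : S, ‖u l.1 x‖ ^ 2)
        ≤ Real.exp 1 * ∑' l : S, Real.exp (-tu * Λ l.1 ^ 2) * ‖u l.1 x‖ ^ 2 := by
      rw [← tsum_mul_left]
      exact Summable.tsum_le_tsum hbound hfS (((hsum tu htu).subtype S).mul_left (Real.exp 1))
    have step2 : (∑' l : S, Real.exp (-tu * Λ l.1 ^ 2) * ‖u l.1 x‖ ^ 2) ≤ p tu x x := by
      rw [← (hdiag tu htu x).tsum_eq]
      exact Summable.tsum_subtype_le _ S (fun l => by positivity) (hsum tu htu)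
    calc (∑' l : S, ‖u l.1 x‖ ^ 2)
        ≤ Real.exp 1 * ∑' l : S, Real.exp (-tu * Λ l.1 ^ 2) * ‖u l.1 x‖ ^ 2 := step1
      _ ≤ Real.exp 1 * p tu x x := by
          apply mul_le_mul_of_nonneg_left step2 (Real.exp_nonneg _)
      _ ≤ Real.exp 1 * (C₂ * s ^ d) := by
          apply mul_le_mul_of_nonneg_left hpu (Real.exp_nonneg _)
      _ ≤ Real.exp 1 * (C₂ * (a₂ / V)) := by
          apply mul_le_mul_of_nonneg_left _ (Real.exp_nonneg _)
          exact mul_le_mul_of_nonneg_left hVs2 hC₂.le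
      _ = Real.exp 1 * C₂ * a₂ / V := by ring
  -- lower bound time
  set tl : ℝ := T / s ^ 2 with htldef
  have htl : 0 < tl := div_pos hTpos (by positivity)
  have htl1 : tl < 1 := (div_lt_one (by positivity)).mpr hsT
  have htl2 : 0 < tl / 2 := by linarith
  have htl21 : tl / 2 < 1 := by linarith
  have htls : tl * s ^ 2 = T := by rw [htldef]; field_simp
  have htlr : tl ^ (-(d:ℝ)/2) = T ^ (-(d:ℝ)/2) * s ^ d := hsd T hTpos
  have htlrpos : 0 < tl ^ (-(d:ℝ)/2) := Real.rpow_pos_of_pos htl _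
  have hhalf : (tl/2) ^ (-(d:ℝ)/2) = tl ^ (-(d:ℝ)/2) * P := by
    rw [hPdef, div_eq_mul_inv, Real.mul_rpow htl.le (by norm_num),
      Real.inv_rpow (by norm_num : (0:ℝ) ≤ 2), ← Real.rpow_neg (by norm_num : (0:ℝ) ≤ 2),
      neg_div, neg_neg]
  -- Gaussian bounds at tl and tl/2
  have hGl := (hgauss tl htl htl1 x x).1
  rw [dist_self] at hGl
  have hpl : C₁ * tl ^ (-(d:ℝ)/2) ≤ p tl x x := by
    calc C₁ * tl ^ (-(d:ℝ)/2) = C₁ * tl ^ (-(d:ℝ)/2) * Real.exp (-c₁ * 0 ^ 2 / tl) := by norm_num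
      _ ≤ p tl x x := hGl
  have hGh := (hgauss (tl/2) htl2 htl21 x x).2
  rw [dist_self] at hGh
  have hph : p (tl/2) x x ≤ C₂ * ((tl/2) ^ (-(d:ℝ)/2)) := by
    calc p (tl/2) x x ≤ C₂ * (tl/2) ^ (-(d:ℝ)/2) * Real.exp (-c₂ * 0 ^ 2 / (tl/2)) := hGh
      _ = C₂ * ((tl/2) ^ (-(d:ℝ)/2)) := by norm_num
  -- tail bound
  have htailterm : ∀ l : ↥Sᶜ, Real.exp (-tl * Λ l.1 ^ 2) * ‖u l.1 x‖ ^ 2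
      ≤ Real.exp (-(T/2)) * (Real.exp (-(tl/2) * Λ l.1 ^ 2) * ‖u l.1 x‖ ^ 2) := by
    intro l
    have hl : s < Λ l.1 := by
      have := l.2
      simp only [hSdef, Set.mem_compl_iff, Set.mem_setOf_eq, not_le] at this
      exact this
    have hΛs : s ^ 2 ≤ Λ l.1 ^ 2 := pow_le_pow_left₀ hsp.le hl.le 2
    have h1 : Real.exp (-tl * Λ l.1 ^ 2) ≤ Real.exp (-(T/2)) * Real.exp (-(tl/2) * Λ l.1 ^ 2) := by
      rw [← Real.exp_add]
      apply Real.exp_le_exp.mpr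
      have hmm : tl / 2 * s ^ 2 ≤ tl / 2 * Λ l.1 ^ 2 :=
        mul_le_mul_of_nonneg_left hΛs (by linarith)
      linarith [htls]
    calc Real.exp (-tl * Λ l.1 ^ 2) * ‖u l.1 x‖ ^ 2
        ≤ (Real.exp (-(T/2)) * Real.exp (-(tl/2) * Λ l.1 ^ 2)) * ‖u l.1 x‖ ^ 2 :=
          mul_le_mul_of_nonneg_right h1 (sq_nonneg _)
      _ = Real.exp (-(T/2)) * (Real.exp (-(tl/2) * Λ l.1 ^ 2) * ‖u l.1 x‖ ^ 2) := mul_assoc _ _ _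
  have htail : (∑' l : ↥Sᶜ, Real.exp (-tl * Λ l.1 ^ 2) * ‖u l.1 x‖ ^ 2)
      ≤ Real.exp (-(T/2)) * p (tl/2) x x := by
    calc (∑' l : ↥Sᶜ, Real.exp (-tl * Λ l.1 ^ 2) * ‖u l.1 x‖ ^ 2)
        ≤ ∑' l : ↥Sᶜ, Real.exp (-(T/2)) * (Real.exp (-(tl/2) * Λ l.1 ^ 2) * ‖u l.1 x‖ ^ 2) :=
          Summable.tsum_le_tsum htailterm ((hsum tl htl).subtype _)
            (((hsum (tl/2) htl2).subtype _).mul_left _)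
      _ = Real.exp (-(T/2)) * ∑' l : ↥Sᶜ, Real.exp (-(tl/2) * Λ l.1 ^ 2) * ‖u l.1 x‖ ^ 2 :=
          tsum_mul_left
      _ ≤ Real.exp (-(T/2)) * p (tl/2) x x := by
          apply mul_le_mul_of_nonneg_left _ (Real.exp_nonneg _)
          rw [← (hdiag (tl/2) htl2 x).tsum_eq]
          exact Summable.tsum_subtype_le _ _ (fun l => by positivity) (hsum (tl/2) htl2)
  have hsplit := Summable.tsum_subtype_add_tsum_subtype_compl (hsum tl htl) S
  rw [(hdiag tl htl x).tsum_eq] at hsplit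
  have htail2 : (∑' l : ↥Sᶜ, Real.exp (-tl * Λ l.1 ^ 2) * ‖u l.1 x‖ ^ 2)
      ≤ C₁ / 2 * tl ^ (-(d:ℝ)/2) := by
    calc (∑' l : ↥Sᶜ, Real.exp (-tl * Λ l.1 ^ 2) * ‖u l.1 x‖ ^ 2)
        ≤ Real.exp (-(T/2)) * p (tl/2) x x := htail
      _ ≤ Real.exp (-(T/2)) * (C₂ * ((tl/2) ^ (-(d:ℝ)/2))) := by
          apply mul_le_mul_of_nonneg_left hph (Real.exp_nonneg _)
      _ = C₂ * P * Real.exp (-(T/2)) * tl ^ (-(d:ℝ)/2) := by rw [hhalf]; ring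
      _ ≤ C₁ / 2 * tl ^ (-(d:ℝ)/2) := mul_le_mul_of_nonneg_right hTtail htlrpos.le
  have hmainS : C₁ / 2 * tl ^ (-(d:ℝ)/2) ≤ ∑' l : S, Real.exp (-tl * Λ l.1 ^ 2) * ‖u l.1 x‖ ^ 2 := by
    have : (∑' l : S, Real.exp (-tl * Λ l.1 ^ 2) * ‖u l.1 x‖ ^ 2)
        = p tl x x - ∑' l : ↥Sᶜ, Real.exp (-tl * Λ l.1 ^ 2) * ‖u l.1 x‖ ^ 2 := by
      linarith [hsplit]
    rw [this]
    linarith [hpl, htail2]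
  have hlow2 : (∑' l : S, Real.exp (-tl * Λ l.1 ^ 2) * ‖u l.1 x‖ ^ 2) ≤ ∑' l : S, ‖u l.1 x‖ ^ 2 := by
    apply Summable.tsum_le_tsum _ ((hsum tl htl).subtype _) hfS
    intro l
    have h1 : Real.exp (-tl * Λ l.1 ^ 2) ≤ 1 := by
      apply Real.exp_le_one_iff.mpr
      have : 0 ≤ tl * Λ l.1 ^ 2 := mul_nonneg htl.le (sq_nonneg _)
      linarith
    calc Real.exp (-tl * Λ l.1 ^ 2) * ‖u l.1 x‖ ^ 2
        ≤ 1 * ‖u l.1 x‖ ^ 2 := mul_le_mul_of_nonneg_right h1 (sq_nonneg _)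
      _ = ‖u l.1 x‖ ^ 2 := one_mul _
  have hlower : C₁/2 * T ^ (-(d:ℝ)/2) * a₁ / V ≤ ∑' l : S, ‖u l.1 x‖ ^ 2 := by
    have hTrp : 0 < T ^ (-(d:ℝ)/2) := Real.rpow_pos_of_pos hTpos _
    calc C₁/2 * T ^ (-(d:ℝ)/2) * a₁ / V = (C₁/2 * T ^ (-(d:ℝ)/2)) * (a₁ / V) := by ring
      _ ≤ (C₁/2 * T ^ (-(d:ℝ)/2)) * s ^ d := by
          apply mul_le_mul_of_nonneg_left hVs1 (by positivity)
      _ = C₁ / 2 * tl ^ (-(d:ℝ)/2) := by rw [htlr]; ring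
      _ ≤ ∑' l : S, Real.exp (-tl * Λ l.1 ^ 2) * ‖u l.1 x‖ ^ 2 := hmainS
      _ ≤ ∑' l : S, ‖u l.1 x‖ ^ 2 := hlow2
  exact ⟨hlower, hupper⟩
end
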